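/- The Heawood graph is not cycle-conformal: it contains an even cycle C of length 8 such that the Heawood graph minus V(C) has no perfect matching. -/

import Mathlib

open SimpleGraph

/-- A graph has a perfect matching. -/
def hasPM {V : Type*} (G : SimpleGraph V) : Prop :=
  ∃ M : G.Subgraph, M.IsPerfectMatching

/-- The graph obtained from `G` by deleting the vertices in `s`. -/
def delVerts {V : Type*} (G : SimpleGraph V) (s : Set V) : SimpleGraph ↥(sᶜ) :=
  G.induce sᶜ

/-- A graph is cycle-conformal if it has a perfect matching and deleting the
vertex set of any even cycle leaves a graph with a perfect matching. -/
def cycleConformal {V : Type*} (G : SimpleGraph V) : Prop :=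
  hasPM G ∧ ∀ (v : V) (c : G.Walk v v), c.IsCycle → Even c.length →
    hasPM (delVerts G {x | x ∈ c.support})

/-- The Heawood graph: vertices `0, …, 13` arranged in a 14-cycle, with a chord
from `i` to `i + 5 (mod 14)` for each even `i`. -/
def heawoodGraph : SimpleGraph (Fin 14) :=
  SimpleGraph.fromRel (fun a b => b = a + 1 ∨ (Even (a : ℕ) ∧ b = a + 5))


instance : DecidableRel heawoodGraph.Adj := fun a b =>
  decidable_of_iff _ (SimpleGraph.fromRel_adj _ a b).symm

def hadj (a b : Fin 14) (h : heawoodGraph.Adj a b := by decide) :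
    heawoodGraph.Adj a b := h

def myCycle : heawoodGraph.Walk 0 0 :=
  .cons (hadj 0 1) (.cons (hadj 1 2) (.cons (hadj 2 3) (.cons (hadj 3 4)
    (.cons (hadj 4 9) (.cons (hadj 9 8) (.cons (hadj 8 13)
      (.cons (hadj 13 0) .nil)))))))

/-- The Heawood graph is not cycle-conformal: it contains an (even) cycle of
length 8 whose vertex deletion leaves a graph with no perfect matching. -/
theorem heawood_not_cycleConformal :
    ∃ (v : Fin 14) (c : heawoodGraph.Walk v v),
      c.IsCycle ∧ c.length = 8 ∧
      ¬ hasPM (delVerts heawoodGraph {x | x ∈ c.support}) := by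
  refine ⟨0, myCycle, ?_, rfl, ?_⟩
  · constructor
    · constructor
      · constructor
        simp only [myCycle, SimpleGraph.Walk.edges_cons, SimpleGraph.Walk.edges_nil]
        decide
      · simp [myCycle]
    · simp only [myCycle, SimpleGraph.Walk.support_cons, SimpleGraph.Walk.support_nil,
        List.tail_cons]
      decide
  · rintro ⟨M, hMm, hMs⟩
    have hmem : ∀ b : Fin 14, b ∈ myCycle.support ↔
        b ∈ [0, 1, 2, 3, 4, 9, 8, 13] := by decide
    have h5 : (5 : Fin 14) ∈ ({x | x ∈ myCycle.support} : Set (Fin 14))ᶜ := by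
      simp [Set.mem_compl_iff, Set.mem_setOf_eq, hmem]
    have h7 : (7 : Fin 14) ∈ ({x | x ∈ myCycle.support} : Set (Fin 14))ᶜ := by
      simp [Set.mem_compl_iff, Set.mem_setOf_eq, hmem]
    obtain ⟨a, ha, hau⟩ := hMm (hMs ⟨5, h5⟩)
    obtain ⟨b, hb, hbu⟩ := hMm (hMs ⟨7, h7⟩)
    have key : ∀ x : Fin 14, x ∉ myCycle.support →
        (heawoodGraph.Adj 5 x → x = 6) ∧ (heawoodGraph.Adj 7 x → x = 6) := by
      decide
    have haG := M.adj_sub ha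
    have hbG := M.adj_sub hb
    have ha6 : (a : Fin 14) = 6 := (key a (a.2)).1 haG
    have hb6 : (b : Fin 14) = 6 := (key b (b.2)).2 hbG
    have hab : a = b := Subtype.ext (ha6.trans hb6.symm)
    subst hab
    obtain ⟨c', hc', hcu⟩ := hMm (hMs a)
    have h1 := hcu _ (M.adj_symm ha)
    have h2 := hcu _ (M.adj_symm hb)
    have : (⟨5, h5⟩ : ↥({x | x ∈ myCycle.support} : Set (Fin 14))ᶜ) = ⟨7, h7⟩ := h1.trans h2.symm
    have : (5 : Fin 14) = 7 := congrArg Subtype.val this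
    exact absurd this (by decide)
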